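/- For every n ≥ 1 and every positive real q, the q-Eulerian polynomial A_n(x;q) = ∑_{w ∈ S_n} q^{inv(w)} x^{des(w)} is real-rooted. -/

import Mathlib

open Polynomial

/-- A real polynomial is real-rooted if it is zero or all its roots, counted with
multiplicity, are real. -/
def RealRooted (f : Polynomial ℝ) : Prop :=
  f = 0 ∨ Multiset.card f.roots = f.natDegree

/-- The number of inversions of a permutation `w` of `Fin n`:
pairs `i < j` with `w i > w j`. -/
def invP {n : ℕ} (w : Equiv.Perm (Fin n)) : ℕ :=
  (Finset.univ.filter fun p : Fin n × Fin n => p.1 < p.2 ∧ w p.2 < w p.1).card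

/-- The word `(w(1),…,w(n))` of a permutation, as a list of values in `{0,…,n-1}`. -/
def wordOf {n : ℕ} (w : Equiv.Perm (Fin n)) : List ℕ :=
  List.ofFn fun i => (w i).val

/-- The number of descents of a word: indices `i` with `L_i > L_{i+1}`. -/
def desL (L : List ℕ) : ℕ :=
  ((Finset.range (L.length - 1)).filter fun i => L.getD (i + 1) 0 < L.getD i 0).card

section Analytic

open Complex Finset


noncomputable def eI (φ : ℝ) : ℂ := Complex.exp (φ * Complex.I)

lemma eI_ne_zero (φ : ℝ) : eI φ ≠ 0 := Complex.exp_ne_zero _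

lemma eI_mul (a b : ℝ) : eI a * eI b = eI (a + b) := by
  rw [eI, eI, eI, ← Complex.exp_add, ← add_mul]; push_cast; ring_nf

lemma eI_re (φ : ℝ) : (eI φ).re = Real.cos φ := by
  simp [eI, Complex.exp_ofReal_mul_I_re]

lemma eI_im (φ : ℝ) : (eI φ).im = Real.sin φ := by
  simp [eI, Complex.exp_ofReal_mul_I_im]

lemma conj_eI (φ : ℝ) : (starRingEnd ℂ) (eI φ) = eI (-φ) := by
  rw [eI, eI, ← Complex.exp_conj]; congr 1; simp

lemma eI_zero : eI 0 = 1 := by simp [eI]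

lemma re_smul_eI (r φ : ℝ) : ((r:ℂ) * eI φ).re = r * Real.cos φ := by
  simp [Complex.mul_re, eI_re, eI_im]

lemma im_smul_eI (r φ : ℝ) : ((r:ℂ) * eI φ).im = r * Real.sin φ := by
  simp [Complex.mul_im, eI_re, eI_im]


open Finset in
lemma sector_sum {m : ℕ} (hm : 1 ≤ m) (w : ℕ → ℂ) (a b : ℝ) (hab : a ≤ b)
    (hba : b - a < Real.pi)
    (h : ∀ i < m, ∃ (r : ℝ) (φ : ℝ), 0 < r ∧ a ≤ φ ∧ φ ≤ b ∧ w i = (r : ℂ) * eI φ) :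
    ∃ (s : ℝ) (φ : ℝ), 0 < s ∧ a ≤ φ ∧ φ ≤ b ∧ ∑ i ∈ range m, w i = (s : ℂ) * eI φ := by
  set c : ℝ := (a + b) / 2 with hc
  set S : ℂ := ∑ i ∈ range m, w i with hS
  have hre : 0 < (S * eI (-c)).re := by
    have : S * eI (-c) = ∑ i ∈ range m, w i * eI (-c) := by
      rw [hS, Finset.sum_mul]
    rw [this, Complex.re_sum]
    apply Finset.sum_pos
    · intro i hi
      obtain ⟨r, φ, hr, hφa, hφb, hw⟩ := h i (Finset.mem_range.mp hi)
      rw [hw, mul_assoc, eI_mul, re_smul_eI]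
      apply mul_pos hr
      apply Real.cos_pos_of_mem_Ioo
      constructor <;> nlinarith
    · exact ⟨0, Finset.mem_range.mpr hm⟩
  have hS'ne : S * eI (-c) ≠ 0 := fun hz => by simp [hz] at hre
  set ψ : ℝ := (S * eI (-c)).arg with hψ
  have hψlt : |ψ| < Real.pi / 2 := Complex.abs_arg_lt_pi_div_two_iff.mpr (Or.inl hre)
  set s : ℝ := ‖S * eI (-c)‖ with hs
  have hs0 : 0 < s := norm_pos_iff.mpr hS'ne
  have hrep : S * eI (-c) = (s : ℂ) * eI ψ := by
    rw [hs, hψ, eI]; exact (Complex.norm_mul_exp_arg_mul_I _).symm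
  have hSrep : S = (s : ℂ) * eI (ψ + c) := by
    have := congrArg (· * eI c) hrep
    rw [mul_assoc, mul_assoc, eI_mul, eI_mul, neg_add_cancel, eI_zero, mul_one] at this
    exact this
  refine ⟨s, ψ + c, hs0, ?_, ?_, hSrep⟩
  · -- a ≤ ψ + c
    by_contra hlt
    push_neg at hlt
    have him : 0 ≤ (S * eI (-a)).im := by
      have : S * eI (-a) = ∑ i ∈ range m, w i * eI (-a) := by rw [hS, Finset.sum_mul]
      rw [this, Complex.im_sum]
      apply Finset.sum_nonneg
      intro i hi
      obtain ⟨r, φ, hr, hφa, hφb, hw⟩ := h i (Finset.mem_range.mp hi)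
      rw [hw, mul_assoc, eI_mul, im_smul_eI]
      have : 0 ≤ Real.sin (φ + -a) :=
        Real.sin_nonneg_of_nonneg_of_le_pi (by linarith) (by linarith)
      nlinarith
    rw [hSrep, mul_assoc, eI_mul, im_smul_eI] at him
    have hsin : Real.sin (ψ + c + -a) < 0 := by
      apply Real.sin_neg_of_neg_of_neg_pi_lt
      · linarith
      · have := abs_lt.mp hψlt; nlinarith
    nlinarith
  · -- ψ + c ≤ b
    by_contra hlt
    push_neg at hlt
    have him : (S * eI (-b)).im ≤ 0 := by
      have : S * eI (-b) = ∑ i ∈ range m, w i * eI (-b) := by rw [hS, Finset.sum_mul]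
      rw [this, Complex.im_sum]
      apply Finset.sum_nonpos
      intro i hi
      obtain ⟨r, φ, hr, hφa, hφb, hw⟩ := h i (Finset.mem_range.mp hi)
      rw [hw, mul_assoc, eI_mul, im_smul_eI]
      have h1 : Real.sin (φ + -b) ≤ 0 := by
        apply Real.sin_nonpos_of_nonpos_of_neg_pi_le <;> linarith
      nlinarith
    rw [hSrep, mul_assoc, eI_mul, im_smul_eI] at him
    have hsin : 0 < Real.sin (ψ + c + -b) := by
      apply Real.sin_pos_of_pos_of_lt_pi
      · linarith
      · have := abs_lt.mp hψlt; nlinarith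
    nlinarith

/-- The inductive package: the family `F` (of size `m`) lies on rays within an
angular window of width `ψ`, with angles ordered. -/
def Pack (m : ℕ) (ψ : ℝ) (F : ℕ → ℂ) : Prop :=
  ∃ θ s : ℕ → ℝ,
    (∀ i j, i ≤ j → j < m → θ i ≤ θ j) ∧
    (∀ i j, i < m → j < m → θ i - θ j ≤ ψ) ∧
    (∀ i, i < m → 0 < s i ∧ F i = (s i : ℂ) * eI (θ i))

lemma mono_of_consec {f : ℕ → ℝ} {m : ℕ} (h : ∀ d, d + 1 ≤ m → f d ≤ f (d + 1)) :
    ∀ i j, i ≤ j → j ≤ m → f i ≤ f j := by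
  intro i j hij hjm
  induction j with
  | zero => simp_all
  | succ k ih =>
    rcases Nat.eq_or_lt_of_le hij with rfl | hlt
    · exact le_refl _
    · exact le_trans (ih (by omega) (by omega)) (h k hjm)

lemma smul_eI_mul (a b α β : ℝ) :
    ((a:ℂ) * eI α) * ((b:ℂ) * eI β) = ((a*b : ℝ):ℂ) * eI (α + β) := by
  push_cast; rw [← eI_mul]; ring

lemma termA {ψ ρ : ℝ} (hψπ : ψ < Real.pi) (hρ : 0 < ρ)
    (c δ : ℝ) (hc : 0 < c) (hδ0 : 0 ≤ δ) (hδψ : δ ≤ ψ) :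
    0 ≤ ((((ρ:ℂ) * eI ψ) - 1) * ((c:ℂ) * eI (-δ))).im := by
  have expand : (((ρ:ℂ) * eI ψ) - 1) * ((c:ℂ) * eI (-δ))
      = ((ρ*c : ℝ):ℂ) * eI (ψ + -δ) - ((c:ℝ):ℂ) * eI (-δ) := by
    have h1 : (((ρ:ℂ) * eI ψ) - 1) * ((c:ℂ) * eI (-δ))
        = ((ρ:ℂ) * eI ψ) * ((c:ℂ) * eI (-δ)) - ((c:ℂ) * eI (-δ)) := by ring
    rw [h1, smul_eI_mul]
  rw [expand, Complex.sub_im, im_smul_eI, im_smul_eI]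
  have h1 : 0 ≤ Real.sin (ψ + -δ) :=
    Real.sin_nonneg_of_nonneg_of_le_pi (by linarith) (by linarith)
  have h2 : Real.sin (-δ) ≤ 0 := by
    rw [Real.sin_neg]
    have : 0 ≤ Real.sin δ := Real.sin_nonneg_of_nonneg_of_le_pi (by linarith) (by linarith)
    linarith
  nlinarith [mul_nonneg (mul_pos hρ hc).le h1, mul_nonneg hc.le (neg_nonneg.mpr h2)]

lemma termB {ψ ρ : ℝ} (hψπ : ψ < Real.pi) (hρ : 0 < ρ)
    (c δ : ℝ) (hc : 0 < c) (hδ0 : 0 ≤ δ) (hδψ : δ ≤ ψ) :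
    0 ≤ ((((ρ:ℂ) * eI ψ) - 1) * ((ρ:ℂ) * eI (-ψ)) * ((c:ℂ) * eI δ)).im := by
  have expand : (((ρ:ℂ) * eI ψ) - 1) * ((ρ:ℂ) * eI (-ψ)) * ((c:ℂ) * eI δ)
      = ((ρ*ρ*c : ℝ):ℂ) * eI (ψ + -ψ + δ) - ((ρ*c : ℝ):ℂ) * eI (-ψ + δ) := by
    have h1 : (((ρ:ℂ) * eI ψ) - 1) * ((ρ:ℂ) * eI (-ψ)) * ((c:ℂ) * eI δ)
        = (((ρ:ℂ) * eI ψ) * ((ρ:ℂ) * eI (-ψ))) * ((c:ℂ) * eI δ)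
          - ((ρ:ℂ) * eI (-ψ)) * ((c:ℂ) * eI δ) := by ring
    rw [h1, smul_eI_mul, smul_eI_mul, smul_eI_mul]
  rw [expand, Complex.sub_im, im_smul_eI, im_smul_eI]
  have e1 : ψ + -ψ + δ = δ := by ring
  rw [e1]
  have h1 : 0 ≤ Real.sin δ :=
    Real.sin_nonneg_of_nonneg_of_le_pi (by linarith) (by linarith)
  have h2 : Real.sin (-ψ + δ) ≤ 0 := by
    have e2 : -ψ + δ = -(ψ - δ) := by ring
    rw [e2, Real.sin_neg]
    have : 0 ≤ Real.sin (ψ - δ) :=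
      Real.sin_nonneg_of_nonneg_of_le_pi (by linarith) (by linarith)
    linarith
  nlinarith [mul_nonneg (mul_pos (mul_pos hρ hρ) hc).le h1,
    mul_nonneg (mul_pos hρ hc).le (neg_nonneg.mpr h2)]

lemma conj_smul_eI (r α : ℝ) : (starRingEnd ℂ) ((r:ℂ) * eI α) = (r:ℂ) * eI (-α) := by
  rw [map_mul, Complex.conj_ofReal, conj_eI]

lemma step {ψ ρ : ℝ} (hψ0 : 0 < ψ) (hψπ : ψ < Real.pi) (hρ : 0 < ρ)
    {m : ℕ} (hm : 1 ≤ m) {F G : ℕ → ℂ}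
    (hF : Pack m ψ F)
    (hG : ∀ d, d ≤ m →
      G d = ((ρ:ℂ) * eI ψ) * (∑ i ∈ Finset.range d, F i) + ∑ i ∈ Finset.Ico d m, F i) :
    Pack (m + 1) ψ G := by
  obtain ⟨θ, s, hmono, hwin, hrep⟩ := hF
  set z : ℂ := (ρ:ℂ) * eI ψ with hz
  set a : ℕ → ℝ := fun d => if d < m then θ d else ψ + θ 0 with ha
  set b : ℕ → ℝ := fun d => if d = 0 then θ (m-1) else ψ + θ (d-1) with hb
  have ha1 : ∀ e, e < m → a e = θ e := by
    intro e he; simp only [ha]; rw [if_pos he]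
  have ha2 : ∀ e, ¬ e < m → a e = ψ + θ 0 := by
    intro e he; simp only [ha]; rw [if_neg he]
  have hb1 : b 0 = θ (m-1) := by simp only [hb]; simp
  have hb2 : ∀ e : ℕ, e ≠ 0 → b e = ψ + θ (e-1) := by
    intro e he; simp only [hb]; rw [if_neg he]
  have hGsum : ∀ d, d ≤ m →
      G d = ∑ i ∈ Finset.range m, (if i < d then z * F i else F i) := by
    intro d hd
    rw [Finset.sum_ite]
    have h1 : (Finset.range m).filter (fun i => i < d) = Finset.range d := by
      ext x; simp only [Finset.mem_filter, Finset.mem_range]; omega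
    have h2 : (Finset.range m).filter (fun i => ¬ i < d) = Finset.Ico d m := by
      ext x; simp only [Finset.mem_filter, Finset.mem_range, Finset.mem_Ico]; omega
    rw [h1, h2, hG d hd, Finset.mul_sum]
  have key : ∀ d, d ≤ m → ∃ (t : ℝ) (φ : ℝ), 0 < t ∧ a d ≤ φ ∧ φ ≤ b d ∧
      G d = (t:ℂ) * eI φ := by
    intro d hd
    have habw : a d ≤ b d ∧ b d - a d < Real.pi := by
      rcases Nat.eq_zero_or_pos d with rfl | hd0
      · rw [ha1 0 (by omega), hb1]
        have h1 := hmono 0 (m-1) (by omega) (by omega)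
        have h2 := hwin (m-1) 0 (by omega) (by omega)
        constructor <;> linarith
      · rcases Nat.lt_or_ge d m with hdm | hdm
        · rw [ha1 d hdm, hb2 d (by omega)]
          have h1 := hwin d (d-1) (by omega) (by omega)
          have h2 := hmono (d-1) d (by omega) (by omega)
          constructor <;> linarith
        · have hdm' : d = m := by omega
          rw [hdm', ha2 m (by omega), hb2 m (by omega)]
          have h1 := hmono 0 (m-1) (by omega) (by omega)
          have h2 := hwin (m-1) 0 (by omega) (by omega)
          constructor <;> linarith
    have hab : a d ≤ b d := habw.1
    have hwidth : b d - a d < Real.pi := habw.2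
    obtain ⟨t, φ, h1, h2, h3, h4⟩ := sector_sum hm
      (fun i => if i < d then z * F i else F i) (a d) (b d) hab hwidth (by
        intro i him
        by_cases hid : i < d
        · refine ⟨ρ * s i, ψ + θ i, mul_pos hρ (hrep i him).1, ?_, ?_, ?_⟩
          · rcases Nat.lt_or_ge d m with hdm | hdm
            · rw [ha1 d hdm]
              have := hwin d i hdm him
              linarith
            · rw [ha2 d (by omega)]
              have := hmono 0 i (by omega) him
              linarith
          · rw [hb2 d (by omega)]
            have := hmono i (d-1) (by omega) (by omega)
            linarith
          · simp only [if_pos hid]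
            rw [(hrep i him).2, hz, smul_eI_mul]
        · refine ⟨s i, θ i, (hrep i him).1, ?_, ?_, by simp only [if_neg hid]; exact (hrep i him).2⟩
          · rw [ha1 d (by omega)]
            exact hmono d i (by omega) him
          · rcases Nat.eq_zero_or_pos d with rfl | hd0
            · rw [hb1]
              exact hmono i (m-1) (by omega) (by omega)
            · rw [hb2 d (by omega)]
              have := hwin i (d-1) him (by omega)
              linarith)
    exact ⟨t, φ, h1, h2, h3, by rw [hGsum d hd]; exact h4⟩
  choose t φ ht hφa hφb hGrep using key
  set Θ : ℕ → ℝ := fun d => if h : d ≤ m then φ d h else 0 with hΘ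
  set T : ℕ → ℝ := fun d => if h : d ≤ m then t d h else 1 with hT
  have hTpos : ∀ d, d ≤ m → 0 < T d := by
    intro d hd; rw [hT]; simp only [hd, dif_pos]; exact ht d hd
  have hGrep' : ∀ d, (hd : d ≤ m) → G d = (T d : ℂ) * eI (Θ d) := by
    intro d hd; rw [hT, hΘ]; simp only [hd, dif_pos]; exact hGrep d hd
  have hΘa : ∀ d, (hd : d ≤ m) → a d ≤ Θ d := by
    intro d hd; rw [hΘ]; simp only [hd, dif_pos]; exact hφa d hd
  have hΘb : ∀ d, (hd : d ≤ m) → Θ d ≤ b d := by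
    intro d hd; rw [hΘ]; simp only [hd, dif_pos]; exact hφb d hd
  have hconsec : ∀ d, d + 1 ≤ m → Θ d ≤ Θ (d + 1) := by
    intro d hd
    have hdm : d < m := by omega
    have hGd1 : G (d+1) = G d + (z - 1) * F d := by
      rw [hGsum (d+1) (by omega), hGsum d (by omega)]
      have hsplit : ∀ i ∈ Finset.range m, (if i < d+1 then z * F i else F i)
          = (if i < d then z * F i else F i) + (if i = d then (z - 1) * F i else 0) := by
        intro i _
        by_cases h1 : i < d
        · rw [if_pos h1, if_pos (by omega), if_neg (by omega)]; ring
        · by_cases h2 : i = d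
          · subst h2
            rw [if_pos (by omega), if_neg (by omega), if_pos rfl]; ring
          · rw [if_neg (by omega), if_neg h1, if_neg h2]; ring
      rw [Finset.sum_congr rfl hsplit, Finset.sum_add_distrib, Finset.sum_ite_eq',
        if_pos (Finset.mem_range.mpr hdm)]
    have him0 : 0 ≤ ((z - 1) * F d * (starRingEnd ℂ) (G d)).im := by
      rw [hGsum d (by omega), map_sum, Finset.mul_sum, Complex.im_sum]
      apply Finset.sum_nonneg
      intro i hi
      have him' : i < m := Finset.mem_range.mp hi
      by_cases hid : i < d
      · rw [if_pos hid, (hrep i him').2, (hrep d hdm).2, hz, map_mul, conj_smul_eI,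
          conj_smul_eI]
        have e1 : ((ρ:ℂ) * eI ψ - 1) * ((s d:ℂ) * eI (θ d))
              * ((ρ:ℂ) * eI (-ψ) * ((s i:ℂ) * eI (-θ i)))
            = ((ρ:ℂ) * eI ψ - 1) * ((ρ:ℂ) * eI (-ψ))
              * (((s d:ℂ) * eI (θ d)) * ((s i:ℂ) * eI (-θ i))) := by ring
        rw [e1, smul_eI_mul]
        have e2 : θ d + -θ i = θ d - θ i := by ring
        rw [e2]
        exact termB hψπ hρ _ _ (mul_pos (hrep d hdm).1 (hrep i him').1)
          (by have := hmono i d (by omega) hdm; linarith) (hwin d i hdm him')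
      · rw [if_neg hid, (hrep i him').2, (hrep d hdm).2, hz, conj_smul_eI]
        have e1 : ((ρ:ℂ) * eI ψ - 1) * ((s d:ℂ) * eI (θ d)) * ((s i:ℂ) * eI (-θ i))
            = ((ρ:ℂ) * eI ψ - 1) * (((s d:ℂ) * eI (θ d)) * ((s i:ℂ) * eI (-θ i))) := by ring
        rw [e1, smul_eI_mul]
        have e2 : θ d + -θ i = -(θ i - θ d) := by ring
        rw [e2]
        exact termA hψπ hρ _ _ (mul_pos (hrep d hdm).1 (hrep i him').1)
          (by have := hmono d i (by omega) him'; linarith) (hwin i d him' hdm)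
    have him : 0 ≤ (G (d+1) * (starRingEnd ℂ) (G d)).im := by
      have e : G (d+1) * (starRingEnd ℂ) (G d)
          = G d * (starRingEnd ℂ) (G d) + (z - 1) * F d * (starRingEnd ℂ) (G d) := by
        rw [hGd1]; ring
      rw [e, Complex.add_im, Complex.mul_conj]
      simpa using him0
    have e3 : G (d+1) * (starRingEnd ℂ) (G d)
        = ((T (d+1) * T d : ℝ):ℂ) * eI (Θ (d+1) + -Θ d) := by
      rw [hGrep' (d+1) hd, hGrep' d (by omega), conj_smul_eI, smul_eI_mul]
    rw [e3, im_smul_eI] at him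
    have hsin : 0 ≤ Real.sin (Θ (d+1) + -Θ d) := by
      nlinarith [mul_pos (hTpos (d+1) hd) (hTpos d (by omega))]
    -- bounds |Θ(d+1) - Θ d| ≤ ψ
    have hub : Θ (d+1) - Θ d ≤ ψ := by
      have h1 := hΘb (d+1) hd
      have h2 := hΘa d (by omega)
      rw [hb2 (d+1) (by omega)] at h1
      rw [ha1 d hdm] at h2
      simp only [Nat.add_sub_cancel] at h1
      linarith
    have hlb : -ψ ≤ Θ (d+1) - Θ d := by
      have h1 := hΘa (d+1) hd
      have h2 := hΘb d (by omega)
      rcases Nat.eq_zero_or_pos d with rfl | hd0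
      · rw [hb1] at h2
        rcases Nat.lt_or_ge 1 m with h1m | h1m
        · rw [ha1 1 h1m] at h1
          have := hwin (m-1) 1 (by omega) (by omega)
          linarith
        · rw [ha2 1 (by omega)] at h1
          have h4 := hmono (m-1) 0 (by omega) (by omega)
          linarith
      · rw [hb2 d (by omega)] at h2
        rcases Nat.lt_or_ge (d+1) m with h1m | h1m
        · rw [ha1 (d+1) h1m] at h1
          have := hmono (d-1) (d+1) (by omega) h1m
          linarith
        · rw [ha2 (d+1) (by omega)] at h1
          have := hwin (d-1) 0 (by omega) (by omega)
          linarith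
    by_contra hcon
    push_neg at hcon
    have : Real.sin (Θ (d+1) + -Θ d) < 0 := by
      apply Real.sin_neg_of_neg_of_neg_pi_lt
      · linarith
      · linarith
    linarith
  have hΘmono : ∀ i j, i ≤ j → j ≤ m → Θ i ≤ Θ j := mono_of_consec hconsec
  have htot : Θ m = ψ + Θ 0 := by
    have h1 : G m = z * G 0 := by
      rw [hG m le_rfl, hG 0 (by omega), Finset.range_eq_Ico]
      simp
    rw [hGrep' m le_rfl, hGrep' 0 (by omega), hz] at h1
    have e1 : ((ρ:ℂ) * eI ψ) * ((T 0:ℂ) * eI (Θ 0)) = ((ρ * T 0 : ℝ):ℂ) * eI (ψ + Θ 0) :=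
      smul_eI_mul ρ (T 0) ψ (Θ 0)
    rw [e1] at h1
    have h2 := congrArg (fun w => w * eI (-(ψ + Θ 0))) h1
    simp only [mul_assoc, eI_mul] at h2
    have e2 : ψ + Θ 0 + -(ψ + Θ 0) = 0 := by ring
    rw [e2, eI_zero, mul_one] at h2
    have h3 := congrArg Complex.im h2
    rw [im_smul_eI] at h3
    simp only [Complex.ofReal_im] at h3
    have hTm := hTpos m le_rfl
    have hsin : Real.sin (Θ m + -(ψ + Θ 0)) = 0 := by
      rcases mul_eq_zero.mp h3 with h | h
      · exact absurd h (ne_of_gt hTm)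
      · exact h
    have hΘm1 := hΘa m le_rfl
    have hΘm2 := hΘb m le_rfl
    have hΘ01 := hΘa 0 (by omega)
    have hΘ02 := hΘb 0 (by omega)
    rw [ha2 m (by omega)] at hΘm1
    rw [hb2 m (by omega)] at hΘm2
    rw [ha1 0 (by omega)] at hΘ01
    rw [hb1] at hΘ02
    have hw1 := hwin (m-1) 0 (by omega) (by omega)
    have hw2 := hwin 0 (m-1) (by omega) (by omega)
    have := (Real.sin_eq_zero_iff_of_lt_of_lt (by linarith) (by linarith)).mp hsin
    linarith
  refine ⟨Θ, T, ?_, ?_, ?_⟩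
  · intro i j hij hj; exact hΘmono i j hij (by omega)
  · intro i j hi hj
    have h1 : Θ i ≤ Θ m := hΘmono i m (by omega) le_rfl
    have h2 : Θ 0 ≤ Θ j := hΘmono 0 j (by omega) (by omega)
    rw [htot] at h1; linarith
  · intro i hi
    exact ⟨hTpos i (by omega), hGrep' i (by omega)⟩

end Analytic

section Combinatorics

open Finset

def ins {n : ℕ} (v : Fin (n + 1)) (w : Equiv.Perm (Fin n)) : Equiv.Perm (Fin (n + 1)) :=
  (finSuccEquiv n).trans ((Equiv.optionCongr w).trans (finSuccEquiv' v).symm)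

@[simp] lemma ins_zero {n : ℕ} (v : Fin (n + 1)) (w : Equiv.Perm (Fin n)) :
    ins v w 0 = v := by
  simp [ins]

@[simp] lemma ins_succ {n : ℕ} (v : Fin (n + 1)) (w : Equiv.Perm (Fin n)) (i : Fin n) :
    ins v w i.succ = v.succAbove (w i) := by
  simp [ins]

lemma succAbove_lt_self_iff {n : ℕ} (v : Fin (n + 1)) (x : Fin n) :
    v.succAbove x < v ↔ x.val < v.val := by
  rw [Fin.succAbove_lt_iff_castSucc_lt]; exact Iff.rfl

lemma sum_ite_lt' (n k : ℕ) :
    (∑ i ∈ Finset.range n, if i < k then (1:ℕ) else 0) = min k n := by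
  induction n with
  | zero => simp
  | succ m ih =>
    rw [Finset.sum_range_succ, ih]
    rcases Nat.lt_or_ge m k with h | h
    · rw [if_pos h]; omega
    · rw [if_neg (by omega)]; omega

lemma sum_ite_lt (n k : ℕ) (hk : k ≤ n) :
    (∑ i ∈ Finset.range n, if i < k then (1:ℕ) else 0) = k := by
  rw [sum_ite_lt']; omega

lemma invP_ins {n : ℕ} (v : Fin (n + 1)) (w : Equiv.Perm (Fin n)) :
    invP (ins v w) = v.val + invP w := by
  unfold invP
  rw [Finset.card_filter, Finset.card_filter, Fintype.sum_prod_type, Fin.sum_univ_succ]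
  have h0 : (∑ y : Fin (n+1), if (0 : Fin (n+1)) < y ∧ ins v w y < ins v w 0 then 1 else 0)
      = v.val := by
    rw [Fin.sum_univ_succ]
    rw [if_neg (by simp)]
    have : ∀ i : Fin n, (if (0 : Fin (n+1)) < i.succ ∧ ins v w i.succ < ins v w 0 then (1:ℕ) else 0)
        = if (w i).val < v.val then 1 else 0 := by
      intro i
      congr 1
      simp only [ins_zero, ins_succ, eq_iff_iff]
      constructor
      · intro h; exact (succAbove_lt_self_iff v (w i)).mp h.2
      · intro h; exact ⟨Fin.succ_pos i, (succAbove_lt_self_iff v (w i)).mpr h⟩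
    rw [Finset.sum_congr rfl (fun i _ => this i)]
    rw [show (∑ i : Fin n, if (w i).val < v.val then (1:ℕ) else 0)
        = ∑ y : Fin n, if y.val < v.val then (1:ℕ) else 0 from
      Equiv.sum_comp w (fun y => if y.val < v.val then (1:ℕ) else 0)]
    rw [← Finset.sum_range (fun i => if i < v.val then (1:ℕ) else 0), zero_add]
    exact sum_ite_lt n v.val (by omega)
  have h1 : ∀ i : Fin n,
      (∑ y : Fin (n+1), if i.succ < y ∧ ins v w y < ins v w i.succ then (1:ℕ) else 0)
      = ∑ j : Fin n, if i < j ∧ w j < w i then 1 else 0 := by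
    intro i
    rw [Fin.sum_univ_succ, if_neg (by exact fun hcon => (Fin.not_lt_zero _) hcon.1)]
    rw [zero_add]
    apply Finset.sum_congr rfl
    intro j _
    congr 1
    simp only [ins_succ, eq_iff_iff, Fin.succ_lt_succ_iff, Fin.succAbove_lt_succAbove_iff]
  rw [h0, Finset.sum_congr rfl (fun i _ => h1 i), Fintype.sum_prod_type]

lemma getD_wordOf {m : ℕ} (u : Equiv.Perm (Fin m)) (k : ℕ) :
    (wordOf u).getD k 0 = if h : k < m then (u ⟨k, h⟩).val else 0 := by
  by_cases h : k < m
  · rw [dif_pos h, wordOf, List.getD_eq_getElem _ _ (by simpa using h), List.getElem_ofFn]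
  · rw [dif_neg h, wordOf, List.getD_eq_default]
    simpa using Nat.le_of_not_lt h

lemma length_wordOf {m : ℕ} (u : Equiv.Perm (Fin m)) : (wordOf u).length = m := by
  simp [wordOf]

lemma desL_wordOf {m : ℕ} (u : Equiv.Perm (Fin (m + 1))) :
    desL (wordOf u) = ∑ i : Fin m, if (u i.succ).val < (u i.castSucc).val then 1 else 0 := by
  rw [desL, length_wordOf, Finset.card_filter]
  rw [show m + 1 - 1 = m from rfl]
  rw [Finset.sum_range (fun i => if (wordOf u).getD (i+1) 0 < (wordOf u).getD i 0 then (1:ℕ) else 0)]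
  apply Finset.sum_congr rfl
  intro i _
  congr 1
  rw [getD_wordOf, getD_wordOf, dif_pos (by omega : (i:ℕ) + 1 < m + 1),
    dif_pos (by omega : (i:ℕ) < m + 1)]
  have e1 : (⟨(i:ℕ) + 1, by omega⟩ : Fin (m+1)) = i.succ := by
    apply Fin.ext; simp
  have e2 : (⟨(i:ℕ), by omega⟩ : Fin (m+1)) = i.castSucc := by
    apply Fin.ext; simp
  rw [e1, e2]

lemma desL_ins {k : ℕ} (v : Fin (k + 2)) (w : Equiv.Perm (Fin (k + 1))) :
    desL (wordOf (ins v w)) =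
      (if (w 0).val < v.val then 1 else 0) + desL (wordOf w) := by
  rw [desL_wordOf (ins v w), desL_wordOf w, Fin.sum_univ_succ]
  congr 1
  · -- the i = 0 term
    rw [Fin.castSucc_zero, ins_zero]
    have e : (0 : Fin (k+1)).succ = Fin.succ (0 : Fin (k+1)) := rfl
    rw [ins_succ]
    congr 1
    simp only [eq_iff_iff]
    constructor
    · intro h; exact (succAbove_lt_self_iff v (w 0)).mp (Fin.lt_def.mpr h)
    · intro h; exact Fin.lt_def.mp ((succAbove_lt_self_iff v (w 0)).mpr h)
  · apply Finset.sum_congr rfl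
    intro j _
    rw [← Fin.succ_castSucc, ins_succ, ins_succ]
    congr 1
    simp only [eq_iff_iff]
    constructor
    · intro h
      exact Fin.lt_def.mp (Fin.succAbove_lt_succAbove_iff.mp (Fin.lt_def.mpr h))
    · intro h
      exact Fin.lt_def.mp (Fin.succAbove_lt_succAbove_iff.mpr (Fin.lt_def.mpr h))

lemma ins_bijective {n : ℕ} :
    Function.Bijective (fun p : Fin (n+1) × Equiv.Perm (Fin n) => ins p.1 p.2) := by
  rw [Fintype.bijective_iff_injective_and_card]
  constructor
  · rintro ⟨v, w⟩ ⟨v', w'⟩ h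
    simp only at h
    have hv : v = v' := by
      have := DFunLike.congr_fun h (0 : Fin (n+1))
      simpa using this
    subst hv
    have hw : w = w' := by
      apply Equiv.ext
      intro i
      have := DFunLike.congr_fun h i.succ
      simp only [ins_succ] at this
      exact Fin.succAbove_right_injective this
    subst hw; rfl
  · simp [Fintype.card_perm, Nat.factorial_succ]

def flw {n : ℕ} (w : Equiv.Perm (Fin n)) : ℕ := (wordOf w).getD 0 0

lemma flw_succ {k : ℕ} (w : Equiv.Perm (Fin (k+1))) : flw w = (w 0).val := by
  rw [flw, getD_wordOf, dif_pos (Nat.succ_pos k)]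
  rfl

lemma flw_lt {k : ℕ} (w : Equiv.Perm (Fin (k+1))) : flw w < k + 1 := by
  rw [flw_succ]; exact (w 0).isLt

lemma flw_ins {k : ℕ} (v : Fin (k + 2)) (w : Equiv.Perm (Fin (k + 1))) :
    flw (ins v w) = v.val := by
  rw [flw_succ, ins_zero]

noncomputable def FZ (q : ℝ) (z : ℂ) (n : ℕ) (a : ℕ) : ℂ :=
  ∑ w : Equiv.Perm (Fin n),
    if flw w = a then (q:ℂ)^(invP w) * z^(desL (wordOf w)) else 0

lemma FZ_filter (q : ℝ) (z : ℂ) (n : ℕ) (a : ℕ) :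
    FZ q z n a = ∑ w ∈ Finset.univ.filter (fun w : Equiv.Perm (Fin n) => flw w = a),
      (q:ℂ)^(invP w) * z^(desL (wordOf w)) := by
  rw [FZ, Finset.sum_filter]

lemma FZ_total (q : ℝ) (z : ℂ) (k : ℕ) :
    ∑ w : Equiv.Perm (Fin (k+1)), (q:ℂ)^(invP w) * z^(desL (wordOf w))
      = ∑ a ∈ Finset.range (k+1), FZ q z (k+1) a := by
  rw [Finset.sum_congr rfl (fun a _ => FZ_filter q z (k+1) a),
    Finset.sum_fiberwise_eq_sum_filter]
  congr 1
  ext w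
  simp [flw_lt w, Nat.le_of_lt_succ (flw_lt w)]

lemma FZ_one (q : ℝ) (z : ℂ) (a : ℕ) :
    FZ q z 1 a = if a = 0 then 1 else 0 := by
  rw [FZ]
  rw [Finset.sum_eq_single (1 : Equiv.Perm (Fin 1))]
  · have h1 : flw (1 : Equiv.Perm (Fin 1)) = 0 := by rw [flw_succ]; rfl
    have h2 : invP (1 : Equiv.Perm (Fin 1)) = 0 := by
      rw [invP, Finset.card_eq_zero, Finset.filter_eq_empty_iff]
      intro p _
      simp [Subsingleton.elim p.1 p.2]
    have h3 : desL (wordOf (1 : Equiv.Perm (Fin 1))) = 0 := by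
      rw [desL, length_wordOf]
      simp
    rw [h1, h2, h3]
    by_cases ha : a = 0 <;> simp [ha, eq_comm]
  · intro w _ hw
    exact absurd (Subsingleton.elim w 1) hw
  · intro h
    exact absurd (Finset.mem_univ _) h

lemma FZ_rec (q : ℝ) (z : ℂ) {k : ℕ} (b : ℕ) (hb : b ≤ k + 1) :
    FZ q z (k+2) b = (q:ℂ)^b * (z * ∑ a ∈ Finset.range b, FZ q z (k+1) a
      + ∑ a ∈ Finset.Ico b (k+1), FZ q z (k+1) a) := by
  have hstep1 : FZ q z (k+2) b
      = ∑ p : Fin (k+2) × Equiv.Perm (Fin (k+1)),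
          (if (p.1 : ℕ) = b then
            (q:ℂ)^((p.1:ℕ) + invP p.2)
              * z^((if ((p.2 0 : Fin (k+1)) : ℕ) < (p.1:ℕ) then 1 else 0)
                  + desL (wordOf p.2)) else 0) := by
    rw [FZ]
    refine (Fintype.sum_bijective _ ins_bijective _ _ (fun p => ?_)).symm
    rw [flw_ins, invP_ins, desL_ins]
  rw [hstep1, Fintype.sum_prod_type]
  rw [Finset.sum_eq_single (⟨b, by omega⟩ : Fin (k+2))]
  rotate_left
  · intro v _ hv
    apply Finset.sum_eq_zero
    intro w _
    rw [if_neg]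
    intro hcon
    exact hv (Fin.ext hcon)
  · intro h
    exact absurd (Finset.mem_univ _) h
  simp only [if_pos rfl, if_true]
  have hstep2 : ∀ w : Equiv.Perm (Fin (k+1)),
      (q:ℂ)^(b + invP w)
        * z^((if ((w 0 : Fin (k+1)) : ℕ) < b then 1 else 0) + desL (wordOf w))
      = (q:ℂ)^b * ((if ((w 0 : Fin (k+1)) : ℕ) < b then z else 1)
          * ((q:ℂ)^(invP w) * z^(desL (wordOf w)))) := by
    intro w
    by_cases hc : ((w 0 : Fin (k+1)) : ℕ) < b
    · rw [if_pos hc, if_pos hc, pow_add, pow_add, pow_one]; ring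
    · rw [if_neg hc, if_neg hc, pow_add, zero_add]; ring
  rw [Finset.sum_congr rfl (fun w _ => hstep2 w), ← Finset.mul_sum]
  congr 1
  have hfib : ∑ w : Equiv.Perm (Fin (k+1)),
      ((if ((w 0 : Fin (k+1)) : ℕ) < b then z else 1)
        * ((q:ℂ)^(invP w) * z^(desL (wordOf w))))
      = ∑ a ∈ Finset.range (k+1),
          (if a < b then z else 1) * FZ q z (k+1) a := by
    symm
    calc ∑ a ∈ Finset.range (k+1), (if a < b then z else 1) * FZ q z (k+1) a
        = ∑ a ∈ Finset.range (k+1), ∑ w ∈ Finset.univ.filter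
            (fun w : Equiv.Perm (Fin (k+1)) => flw w = a),
            (if ((w 0 : Fin (k+1)) : ℕ) < b then z else 1)
              * ((q:ℂ)^(invP w) * z^(desL (wordOf w))) := by
          refine Finset.sum_congr rfl (fun a _ => ?_)
          rw [FZ_filter, Finset.mul_sum]
          refine Finset.sum_congr rfl (fun w hw => ?_)
          have hfw : flw w = a := (Finset.mem_filter.mp hw).2
          rw [← hfw, flw_succ]
      _ = ∑ w ∈ Finset.univ.filter
            (fun w : Equiv.Perm (Fin (k+1)) => flw w ∈ Finset.range (k+1)),
            (if ((w 0 : Fin (k+1)) : ℕ) < b then z else 1)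
              * ((q:ℂ)^(invP w) * z^(desL (wordOf w))) :=
          Finset.sum_fiberwise_eq_sum_filter _ _ _ _
      _ = ∑ w : Equiv.Perm (Fin (k+1)),
            (if ((w 0 : Fin (k+1)) : ℕ) < b then z else 1)
              * ((q:ℂ)^(invP w) * z^(desL (wordOf w))) := by
          apply Finset.sum_congr
          · ext w
            simp [flw_lt w, Nat.le_of_lt_succ (flw_lt w)]
          · intro w _; rfl
  rw [hfib]
  have hsplit : ∑ a ∈ Finset.range (k+1), (if a < b then z else 1) * FZ q z (k+1) a
      = z * ∑ a ∈ Finset.range b, FZ q z (k+1) a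
        + ∑ a ∈ Finset.Ico b (k+1), FZ q z (k+1) a := by
    rw [show (fun a => (if a < b then z else 1) * FZ q z (k+1) a)
        = fun a => (if a < b then z * FZ q z (k+1) a else 1 * FZ q z (k+1) a) from
      funext (fun a => by by_cases h : a < b <;> simp [h])]
    rw [Finset.sum_ite]
    have h1 : (Finset.range (k+1)).filter (fun a => a < b) = Finset.range b := by
      ext x; simp only [Finset.mem_filter, Finset.mem_range]; omega
    have h2 : (Finset.range (k+1)).filter (fun a => ¬ a < b) = Finset.Ico b (k+1) := by
      ext x; simp only [Finset.mem_filter, Finset.mem_range, Finset.mem_Ico]; omega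
    rw [h1, h2, Finset.mul_sum]
    simp [one_mul]
  rw [hsplit]

end Combinatorics

section Glue

open Complex Finset

lemma pack_scale {m : ℕ} {ψ : ℝ} {F G : ℕ → ℂ} (c : ℕ → ℝ)
    (hc : ∀ d, d < m → 0 < c d) (hFG : ∀ d, d < m → G d = (c d : ℂ) * F d)
    (h : Pack m ψ F) : Pack m ψ G := by
  obtain ⟨θ, s, h1, h2, h3⟩ := h
  refine ⟨θ, fun d => c d * s d, h1, h2, fun i hi => ⟨mul_pos (hc i hi) (h3 i hi).1, ?_⟩⟩
  rw [hFG i hi, (h3 i hi).2]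
  push_cast
  ring

lemma main_pack (q : ℝ) (hq : 0 < q) {ψ ρ : ℝ} (hψ0 : 0 < ψ) (hψπ : ψ < Real.pi)
    (hρ : 0 < ρ) : ∀ k : ℕ, Pack (k+1) ψ (FZ q ((ρ:ℂ) * eI ψ) (k+1)) := by
  intro k
  induction k with
  | zero =>
    refine ⟨fun _ => 0, fun _ => 1, ?_, ?_, ?_⟩
    · intro i j _ _; exact le_refl _
    · intro i j _ _; simpa using hψ0.le
    · intro i hi
      have hi0 : i = 0 := by omega
      subst hi0
      constructor
      · exact one_pos
      · rw [FZ_one, if_pos rfl, eI_zero]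
        simp
  | succ k ih =>
    have hstep := step hψ0 hψπ hρ (m := k+1) (by omega) ih
      (G := fun d => ((ρ:ℂ) * eI ψ) * (∑ i ∈ Finset.range d, FZ q ((ρ:ℂ) * eI ψ) (k+1) i)
        + ∑ i ∈ Finset.Ico d (k+1), FZ q ((ρ:ℂ) * eI ψ) (k+1) i)
      (fun d _ => rfl)
    apply pack_scale (fun d => q ^ d) (fun d _ => pow_pos hq d) ?_ hstep
    intro d hd
    rw [FZ_rec q _ d (by omega)]
    push_cast
    ring

lemma nonvanish (q : ℝ) (hq : 0 < q) (z : ℂ) (hz : 0 < z.im) (k : ℕ) :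
    (∑ w : Equiv.Perm (Fin (k+1)), (q:ℂ)^(invP w) * z^(desL (wordOf w))) ≠ 0 := by
  have hzne : z ≠ 0 := by
    intro h; rw [h] at hz; simp at hz
  set ψ := z.arg with hψ
  have hψ0 : 0 < ψ := by
    rcases lt_or_eq_of_le (Complex.arg_nonneg_iff.mpr hz.le) with h | h
    · exact h
    · exfalso
      have := (Complex.arg_eq_zero_iff.mp h.symm).2
      linarith
  have hψπ : ψ < Real.pi := by
    rcases lt_or_eq_of_le (Complex.arg_le_pi z) with h | h
    · exact h
    · exfalso
      have := (Complex.arg_eq_pi_iff.mp h).2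
      linarith
  set ρ := ‖z‖ with hρdef
  have hρ : 0 < ρ := norm_pos_iff.mpr hzne
  have hzeq : z = (ρ:ℂ) * eI ψ := (Complex.norm_mul_exp_arg_mul_I z).symm
  obtain ⟨θ, s, hmono, hwin, hrep⟩ := main_pack q hq hψ0 hψπ hρ k
  rw [hzeq, FZ_total q ((ρ:ℂ) * eI ψ) k]
  obtain ⟨S, φ, hS, _, _, heq⟩ := sector_sum (m := k+1) (by omega)
    (fun a => FZ q ((ρ:ℂ) * eI ψ) (k+1) a) (θ 0) (θ k)
    (hmono 0 k (by omega) (by omega))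
    (by have := hwin k 0 (by omega) (by omega); linarith)
    (fun i hi => ⟨s i, θ i, (hrep i hi).1, hmono 0 i (by omega) hi,
      hmono i k (by omega) (by omega), (hrep i hi).2⟩)
  rw [heq]
  exact mul_ne_zero (by exact_mod_cast ne_of_gt hS) (eI_ne_zero φ)

lemma card_roots_real (p : Polynomial ℝ) (hp : p ≠ 0)
    (h : ∀ z : ℂ, Polynomial.eval₂ (algebraMap ℝ ℂ) z p = 0 → z.im = 0) :
    Multiset.card p.roots = p.natDegree := by
  suffices H : ∀ (N : ℕ) (p : Polynomial ℝ), p.natDegree = N → p ≠ 0 →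
      (∀ z : ℂ, Polynomial.eval₂ (algebraMap ℝ ℂ) z p = 0 → z.im = 0) →
      Multiset.card p.roots = p.natDegree from H p.natDegree p rfl hp h
  intro N
  induction N using Nat.strong_induction_on with
  | _ N ih =>
    intro p hdeg hp h
    rcases Nat.eq_zero_or_pos N with h0 | hpos
    · have hC : p = Polynomial.C (p.coeff 0) :=
        Polynomial.eq_C_of_natDegree_le_zero (by omega)
      rw [hC, Polynomial.roots_C]
      simp
    · have hmapne : p.map (algebraMap ℝ ℂ) ≠ 0 := Polynomial.map_ne_zero hp
      have hdegmap : (p.map (algebraMap ℝ ℂ)).natDegree = N := by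
        rw [Polynomial.natDegree_map_eq_of_injective (algebraMap ℝ ℂ).injective, hdeg]
      obtain ⟨z, hzroot⟩ := Complex.exists_root
        (by rw [← Polynomial.natDegree_pos_iff_degree_pos, hdegmap]; exact hpos)
      have hz0 : Polynomial.eval₂ (algebraMap ℝ ℂ) z p = 0 := by
        rw [← Polynomial.eval_map]; exact hzroot
      have him := h z hz0
      set r := z.re with hr
      have hzr : z = (r:ℂ) := Complex.ext rfl (by simp [him])
      have hpr : p.eval r = 0 := by
        have heq2 : Polynomial.eval₂ (algebraMap ℝ ℂ) ((r:ℂ)) p = ((p.eval r : ℝ) : ℂ) := by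
          rw [show ((r:ℂ)) = algebraMap ℝ ℂ r from rfl, Polynomial.eval₂_hom]; rfl
      
        rw [hzr, heq2] at hz0
        exact_mod_cast hz0
      obtain ⟨g, hg⟩ := Polynomial.dvd_iff_isRoot.mpr hpr
      have hgne : g ≠ 0 := by
        intro h0; rw [h0, mul_zero] at hg; exact hp hg
      have hdegg : g.natDegree = N - 1 := by
        have hmul := Polynomial.natDegree_mul (Polynomial.X_sub_C_ne_zero r) hgne
        rw [← hg, hdeg, Polynomial.natDegree_X_sub_C] at hmul
        omega
      have hgroots : ∀ w : ℂ, Polynomial.eval₂ (algebraMap ℝ ℂ) w g = 0 → w.im = 0 := by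
        intro w hw
        apply h w
        rw [hg, Polynomial.eval₂_mul, hw, mul_zero]
      have hcard := ih (N-1) (by omega) g hdegg hgne hgroots
      have hpne' : (Polynomial.X - Polynomial.C r) * g ≠ 0 := by rw [← hg]; exact hp
      rw [hg, Polynomial.roots_mul hpne', Polynomial.roots_X_sub_C,
        Polynomial.natDegree_mul (Polynomial.X_sub_C_ne_zero r) hgne,
        Polynomial.natDegree_X_sub_C]
      simp only [Multiset.card_add, Multiset.card_singleton, hcard, hdegg]

end Glue

/-- For every `n ≥ 1` and positive real `q`, the `q`-Eulerian polynomial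
`A_n(x;q) = ∑_{w ∈ S_n} q^{inv(w)} x^{des(w)}` is real-rooted. -/
theorem qEulerian_real_rooted (n : ℕ) (hn : 1 ≤ n) (q : ℝ) (hq : 0 < q) :
    RealRooted (∑ w : Equiv.Perm (Fin n), C (q ^ invP w) * X ^ desL (wordOf w)) := by
  obtain ⟨k, rfl⟩ : ∃ k, n = k + 1 := ⟨n - 1, by omega⟩
  set P : Polynomial ℝ :=
    ∑ w : Equiv.Perm (Fin (k+1)), C (q ^ invP w) * X ^ desL (wordOf w) with hP
  have hev : ∀ z : ℂ, Polynomial.eval₂ (algebraMap ℝ ℂ) z P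
      = ∑ w : Equiv.Perm (Fin (k+1)), (q:ℂ)^(invP w) * z^(desL (wordOf w)) := by
    intro z
    rw [hP, Polynomial.eval₂_finset_sum]
    refine Finset.sum_congr rfl (fun w _ => ?_)
    rw [Polynomial.eval₂_mul, Polynomial.eval₂_C, Polynomial.eval₂_X_pow,
      Complex.coe_algebraMap]
    push_cast
    ring
  have hupper : ∀ z : ℂ, 0 < z.im → Polynomial.eval₂ (algebraMap ℝ ℂ) z P ≠ 0 := by
    intro z hz
    rw [hev z]
    exact nonvanish q hq z hz k
  have hPne : P ≠ 0 := by
    intro h0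
    have := hupper Complex.I (by simp)
    rw [h0] at this
    simp at this
  have hconj : ∀ z : ℂ, Polynomial.eval₂ (algebraMap ℝ ℂ) ((starRingEnd ℂ) z) P
      = (starRingEnd ℂ) (Polynomial.eval₂ (algebraMap ℝ ℂ) z P) := by
    intro z
    rw [Polynomial.hom_eval₂]
    congr 1
    exact RingHom.ext fun r => by simp [Complex.conj_ofReal]
  refine Or.inr (card_roots_real P hPne ?_)
  intro z hz
  by_contra hnz
  rcases lt_or_gt_of_ne hnz with hneg | hpos
  · have h1 : 0 < ((starRingEnd ℂ) z).im := by
      simp only [Complex.conj_im]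
      linarith
    apply hupper _ h1
    rw [hconj z, hz, map_zero]
  · exact hupper z hpos hz
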